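/- (Basic Lemma, part (ii).) Let Ω be a finite set and let H be a subgroup of Sym(Ω) that is not set-transitive and is maximal among the subgroups of Sym(Ω) that are not set-transitive. Suppose H has a regular set on Ω. Then every subgroup G of H is a relation group on Ω. -/

import Mathlib

open Pointwise MulAction

/-- The invariance group `G(R)` of an unordered relation `R` on `Ω`:
all permutations `g` such that `x ∈ R` implies `g • x ∈ R`. -/
def invGroup {Ω : Type*} [Fintype Ω] [DecidableEq Ω] (R : Set (Finset Ω)) :
    Subgroup (Equiv.Perm Ω) where
  carrier := {g | ∀ x ∈ R, g • x ∈ R}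
  one_mem' := fun x hx => by simpa using hx
  mul_mem' := fun ha hb x hx => by rw [mul_smul]; exact ha _ (hb _ hx)
  inv_mem' := by
    intro g hg x hx
    have himg : (fun y : Finset _ => g • y) '' R ⊆ R := by
      rintro - ⟨y, hy, rfl⟩; exact hg y hy
    have heq : (fun y : Finset _ => g • y) '' R = R := by
      apply Set.eq_of_subset_of_ncard_le himg _ (Set.toFinite R)
      rw [Set.ncard_image_of_injective _ (MulAction.injective g)]
    rw [← heq] at hx
    obtain ⟨y, hy, hxy⟩ := hx
    have : g⁻¹ • x = y := by rw [← hxy]; simp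
    rwa [this]

/-- A permutation group on `Ω` is a relation group if it is the invariance group
of some unordered relation on `Ω`. -/
def IsRelationGroup {Ω : Type*} [Fintype Ω] [DecidableEq Ω]
    (G : Subgroup (Equiv.Perm Ω)) : Prop :=
  ∃ R : Set (Finset Ω), G = invGroup R

/-- `w` is a regular set for `G`: only the identity of `G` stabilizes `w` setwise. -/
def IsRegularSet {Ω : Type*} [DecidableEq Ω] (G : Subgroup (Equiv.Perm Ω))
    (w : Finset Ω) : Prop :=
  ∀ g ∈ G, g • w = w → g = 1

/-- The arity of a relation: the set of cardinalities of its members. -/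
def arity {Ω : Type*} (R : Set (Finset Ω)) : Set ℕ := {n | ∃ x ∈ R, x.card = n}

/-- `G` is orbit closed: every permutation mapping each finite subset into its
`G`-orbit already lies in `G`. -/
def IsOrbitClosed {Ω : Type*} [DecidableEq Ω] (G : Subgroup (Equiv.Perm Ω)) : Prop :=
  ∀ g : Equiv.Perm Ω, (∀ x : Finset Ω, ∃ h ∈ G, g • x = h • x) → g ∈ G

/-- `G` is set-transitive: transitive on `k`-element subsets for every `k`. -/
def IsSetTransitive {Ω : Type*} [DecidableEq Ω] (G : Subgroup (Equiv.Perm Ω)) : Prop :=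
  ∀ x y : Finset Ω, x.card = y.card → ∃ g ∈ G, g • x = y

/-- A permutation group is primitive if it is transitive and every block of the
action is trivial (a subsingleton or the whole set). -/
def IsPrimitivePermGroup {Ω : Type*} (G : Subgroup (Equiv.Perm Ω)) : Prop :=
  MulAction.IsPretransitive ↥G Ω ∧
    ∀ B : Set Ω, MulAction.IsBlock ↥G B → B.Subsingleton ∨ B = Set.univ


/-- Main construction: if `H` has a regular set `w` and is intransitive on sets of some
cardinality different from `|w|`, then every `G ≤ H` is a relation group. -/
lemma lemA {Ω : Type*} [Fintype Ω] [DecidableEq Ω]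
    (H : Subgroup (Equiv.Perm Ω))
    (hmax : ∀ H' : Subgroup (Equiv.Perm Ω), H < H' → IsSetTransitive H')
    (w : Finset Ω) (hw : IsRegularSet H w)
    (u v : Finset Ω) (hcard : u.card = v.card) (hne : u.card ≠ w.card)
    (hnc : ∀ g ∈ H, g • u ≠ v)
    (G : Subgroup (Equiv.Perm Ω)) (hG : G ≤ H) :
    IsRelationGroup G := by
  classical
  set F : Set (Finset Ω) := {x | ∃ h ∈ H, h • u = x} with hF
  set R : Set (Finset Ω) := {x | (∃ g ∈ G, g • w = x) ∨ x ∈ F} with hRdef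
  refine ⟨R, ?_⟩
  have hHF : H ≤ invGroup F := by
    intro h hh x hx
    obtain ⟨h', hh', rfl⟩ := hx
    exact ⟨h * h', H.mul_mem hh hh', mul_smul h h' u⟩
  -- any element of `invGroup R` preserves `F`
  have hfF : ∀ f : Equiv.Perm Ω, f ∈ invGroup R → f ∈ invGroup F := by
    intro f hf x hx
    have hxR : x ∈ R := Or.inr hx
    have hfx : f • x ∈ R := hf x hxR
    rcases hfx with ⟨g, hg, hgw⟩ | h2
    · exfalso
      obtain ⟨h, hh, rfl⟩ := hx
      apply hne
      calc u.card = (f • (h • u)).card := by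
            rw [Finset.card_smul_finset, Finset.card_smul_finset]
          _ = (g • w).card := by rw [hgw]
          _ = w.card := Finset.card_smul_finset g w
    · exact h2
  have keyH : invGroup R ≤ H := by
    intro f hf
    by_contra hfH
    have hlt : H < H ⊔ Subgroup.zpowers f := by
      refine lt_of_le_of_ne le_sup_left ?_
      intro heq
      exact hfH (heq ▸ SetLike.le_def.mp le_sup_right (Subgroup.mem_zpowers f))
    obtain ⟨p, hp, hpu⟩ := hmax _ hlt u v hcard
    have hpF : p ∈ invGroup F :=
      (sup_le hHF (Subgroup.zpowers_le.mpr (hfF f hf))) hp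
    have hvF : v ∈ F := by
      rw [← hpu]
      exact hpF u ⟨1, H.one_mem, one_smul _ _⟩
    obtain ⟨h, hh, hhv⟩ := hvF
    exact hnc h hh hhv
  ext f
  constructor
  · intro hfG x hx
    rcases hx with ⟨g, hg, rfl⟩ | ⟨h, hh, rfl⟩
    · exact Or.inl ⟨f * g, G.mul_mem hfG hg, mul_smul f g w⟩
    · exact Or.inr ⟨f * h, H.mul_mem (hG hfG) hh, mul_smul f h u⟩
  · intro hf
    have hfH : f ∈ H := keyH hf
    have hfw : f • w ∈ R := hf w (Or.inl ⟨1, G.one_mem, one_smul _ _⟩)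
    rcases hfw with ⟨g, hg, hgw⟩ | ⟨h, hh, hhu⟩
    · have hmem : g⁻¹ * f ∈ H := H.mul_mem (H.inv_mem (hG hg)) hfH
      have hfix : (g⁻¹ * f) • w = w := by
        rw [mul_smul, ← hgw, ← mul_smul, inv_mul_cancel, one_smul]
      have h1 : g⁻¹ * f = 1 := hw _ hmem hfix
      have : f = g := by
        rw [← one_mul f, ← mul_inv_cancel g, mul_assoc, h1, mul_one]
      exact this ▸ hg
    · exfalso
      apply hne
      calc u.card = (h • u).card := (Finset.card_smul_finset h u).symm
        _ = (f • w).card := by rw [hhu]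
        _ = w.card := Finset.card_smul_finset f w

/-- Basic Lemma, part (ii): if `H` is not set-transitive, is maximal among the
subgroups of `Sym Ω` that are not set-transitive, and has a regular set,
then every subgroup of `H` is a relation group. -/
theorem basicLemma_part_ii {Ω : Type*} [Fintype Ω] [DecidableEq Ω]
    (H : Subgroup (Equiv.Perm Ω)) (hnst : ¬ IsSetTransitive H)
    (hmax : ∀ H' : Subgroup (Equiv.Perm Ω), H < H' → IsSetTransitive H')
    (hreg : ∃ w : Finset Ω, IsRegularSet H w)
    (G : Subgroup (Equiv.Perm Ω)) (hG : G ≤ H) :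
    IsRelationGroup G := by
  classical
  obtain ⟨w, hw⟩ := hreg
  rw [IsSetTransitive] at hnst
  push_neg at hnst
  obtain ⟨u, v, hcard, hnc⟩ := hnst
  by_cases hex : ∃ u' v' : Finset Ω, u'.card = v'.card ∧ u'.card ≠ w.card ∧
      ∀ g ∈ H, g • u' ≠ v'
  · obtain ⟨u', v', h1, h2, h3⟩ := hex
    exact lemA H hmax w hw u' v' h1 h2 h3 G hG
  · push_neg at hex
    -- H is transitive on sets of every cardinality other than `w.card`
    set n := Fintype.card Ω with hn
    set k := w.card with hk
    have hkw : u.card = k := by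
      by_contra hneq
      obtain ⟨g, hg, hgu⟩ := hex u v hcard hneq
      exact hnc g hg hgu
    have smul_compl : ∀ (g : Equiv.Perm Ω) (s : Finset Ω), g • sᶜ = (g • s)ᶜ := by
      intro g s
      ext a
      simp only [Finset.mem_compl]
      constructor
      · rintro hmem hmem'
        rw [Finset.mem_smul_finset] at hmem hmem'
        obtain ⟨b, hb, hba⟩ := hmem
        obtain ⟨c, hc, hca⟩ := hmem'
        rw [Finset.mem_compl] at hb
        simp only [Equiv.Perm.smul_def] at hba hca
        exact hb (by rwa [show b = c from g.injective (by rw [hba, hca])])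
      · intro hmem
        rw [Finset.mem_smul_finset]
        refine ⟨g⁻¹ a, ?_, by simp⟩
        rw [Finset.mem_compl]
        intro hmem'
        apply hmem
        rw [Finset.mem_smul_finset]
        exact ⟨g⁻¹ a, hmem', by simp⟩
    have hn2 : n = 2 * k := by
      have h1 : uᶜ.card = vᶜ.card := by
        rw [Finset.card_compl, Finset.card_compl, hcard]
      have h2 : uᶜ.card = k := by
        by_contra hneq
        obtain ⟨g, hg, hgu⟩ := hex uᶜ vᶜ h1 hneq
        apply hnc g hg
        rw [smul_compl] at hgu
        exact compl_injective hgu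
      rw [Finset.card_compl] at h2
      have hun : u.card ≤ n := by
        simpa using Finset.card_le_univ u
      omega
    have hk0 : k ≠ 0 := by
      intro h0
      have hu0 : u = ∅ := Finset.card_eq_zero.mp (by omega)
      have hv0 : v = ∅ := Finset.card_eq_zero.mp (by omega)
      exact hnc 1 H.one_mem (by rw [one_smul, hu0, hv0])
    by_cases hregx : ∃ x : Finset Ω, x.card = k - 1 ∧ IsRegularSet H x
    · obtain ⟨x, hx, hxreg⟩ := hregx
      refine lemA H hmax x hxreg u v hcard ?_ hnc G hG
      rw [hx, hkw]
      omega
    · push_neg at hregx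
      exfalso
      haveI : Fintype ↥H := Fintype.ofFinite _
      -- a (k-1)-set
      obtain ⟨x0, _, hx0⟩ := Finset.exists_subset_card_eq
        (show k - 1 ≤ (Finset.univ : Finset Ω).card by rw [Finset.card_univ]; omega)
      -- H is transitive on (k-1)-sets
      have htrans : ∀ y : Finset Ω, y.card = k - 1 → ∃ g ∈ H, g • x0 = y := by
        intro y hy
        exact hex x0 y (by rw [hx0, hy]) (by rw [hx0]; omega)
      -- x0 has a nontrivial stabilizer in H
      have hns := hregx x0 hx0
      rw [IsRegularSet] at hns
      push_neg at hns
      obtain ⟨s, hsH, hsx0, hs1⟩ := hns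
      -- upper bound : |H| ≤ C(n,k)
      have hup : Fintype.card ↥H ≤ n.choose k := by
        have hinj : Function.Injective
            (fun h : ↥H => (⟨(h : Equiv.Perm Ω) • w, Finset.card_smul_finset _ w⟩ :
              {s : Finset Ω // s.card = k})) := by
          intro h1 h2 heq
          simp only [Subtype.mk.injEq] at heq
          have hmem : ((h2⁻¹ * h1 : ↥H) : Equiv.Perm Ω) ∈ H := SetLike.coe_mem _
          have hfix : ((h2⁻¹ * h1 : ↥H) : Equiv.Perm Ω) • w = w := by
            push_cast
            rw [mul_smul, heq, ← mul_smul, inv_mul_cancel, one_smul]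
          have : ((h2⁻¹ * h1 : ↥H) : Equiv.Perm Ω) = 1 := hw _ hmem hfix
          have h21 : (h2⁻¹ * h1 : ↥H) = 1 := by
            exact_mod_cast this
          exact (inv_mul_eq_one.mp h21).symm ▸ rfl
        calc Fintype.card ↥H ≤ Fintype.card {s : Finset Ω // s.card = k} :=
              Fintype.card_le_of_injective _ hinj
          _ = n.choose k := Fintype.card_finset_len k
      -- lower bound : 2 * C(n,k-1) ≤ |H|
      have hlow : 2 * n.choose (k - 1) ≤ Fintype.card ↥H := by
        set fb : ↥H → Finset Ω := fun h => (h : Equiv.Perm Ω) • x0 with hfb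
        set T := (Finset.univ : Finset Ω).powersetCard (k - 1) with hT
        have hTcard : T.card = n.choose (k - 1) := by
          rw [hT, Finset.card_powersetCard, Finset.card_univ]
        have hmapsto : ∀ h : ↥H, h ∈ (Finset.univ : Finset ↥H) → fb h ∈ T := by
          intro h _
          rw [hT, Finset.mem_powersetCard]
          exact ⟨Finset.subset_univ _, by rw [hfb, Finset.card_smul_finset, hx0]⟩
        have hsum := Finset.card_eq_sum_card_fiberwise hmapsto
        have hfiber : ∀ y ∈ T, 2 ≤
            ((Finset.univ : Finset ↥H).filter (fun h => fb h = y)).card := by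
          intro y hy
          rw [hT, Finset.mem_powersetCard] at hy
          obtain ⟨g, hgH, hgx⟩ := htrans y hy.2
          have hmem1 : (⟨g, hgH⟩ : ↥H) ∈
              (Finset.univ : Finset ↥H).filter (fun h => fb h = y) :=
            Finset.mem_filter.mpr ⟨Finset.mem_univ _, hgx⟩
          have hmem2 : (⟨g * s, H.mul_mem hgH hsH⟩ : ↥H) ∈
              (Finset.univ : Finset ↥H).filter (fun h => fb h = y) := by
            refine Finset.mem_filter.mpr ⟨Finset.mem_univ _, ?_⟩
            show (g * s) • x0 = y
            rw [mul_smul, hsx0, hgx]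
          have hne12 : (⟨g, hgH⟩ : ↥H) ≠ (⟨g * s, H.mul_mem hgH hsH⟩ : ↥H) := by
            intro heq
            apply hs1
            have h' : g = g * s := congrArg Subtype.val heq
            exact mul_eq_left.mp h'.symm
          exact Finset.one_lt_card.mpr ⟨_, hmem1, _, hmem2, hne12⟩
        have hge : T.card * 2 ≤ ∑ y ∈ T,
            ((Finset.univ : Finset ↥H).filter (fun h => fb h = y)).card := by
          simpa using Finset.card_nsmul_le_sum T _ 2 hfiber
        rw [← Finset.card_univ, hsum]
        omega
      -- now derive a contradiction
      rcases Nat.lt_or_ge k 2 with hk1 | hk2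
      · -- k = 1 : |H| = 2 forces H = Sym(Ω), transitive on singletons
        have hk1' : k = 1 := by omega
        have hHcard : Fintype.card ↥H = 2 := by
          rw [hk1'] at hup hlow
          simp [Nat.choose] at hup hlow
          omega
        have hPcard : Nat.card (Equiv.Perm Ω) = 2 := by
          rw [Nat.card_eq_fintype_card, Fintype.card_perm,
            show Fintype.card Ω = 2 by omega]
          rfl
        have hHtop : H = ⊤ := by
          apply Subgroup.eq_top_of_card_eq
          rw [Nat.card_eq_fintype_card, hHcard, hPcard]
        obtain ⟨a, ha⟩ := Finset.card_eq_one.mp (by omega : u.card = 1)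
        obtain ⟨b, hb⟩ := Finset.card_eq_one.mp (by omega : v.card = 1)
        apply hnc (Equiv.swap a b) (hHtop ▸ Subgroup.mem_top _)
        rw [ha, hb, Finset.smul_finset_singleton]
        simp [Equiv.Perm.smul_def]
      · -- k ≥ 2 : binomial arithmetic contradiction
        have hid : n.choose k * k = n.choose (k - 1) * (n - (k - 1)) := by
          have := Nat.choose_succ_right_eq n (k - 1)
          rwa [show k - 1 + 1 = k by omega] at this
        have hcpos : 0 < n.choose (k - 1) := Nat.choose_pos (by omega)
        have hnk : n - (k - 1) = k + 1 := by omega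
        rw [hnk] at hid
        nlinarith [hup, hlow, hid, hcpos]
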